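/- Let (Ω, 𝔄, P) be a probability space carrying a measurable stochastic process Z = (Z_t)_{t∈[0,1]} with continuous sample paths, 0 ≤ Z_t ≤ m pointwise for some constant m ≥ 1, and E[Z_t] = 1 for every t ∈ [0,1], and a random variable U uniformly distributed on (0,1) and independent of Z. Fix M < 0 and define V_t = max(−U/Z_t, M) for t ∈ [0,1] (with V_t = M when Z_t = 0). Then for every bounded f : [0,1] → (−∞,0] with at most finitely many discontinuities and sup_{t∈[0,1]}|f(t)| ≤ min(|M|, 1/m), P(V_t > f(t) for all t ∈ [0,1]) = E[inf_{t∈[0,1]}(|f(t)| Z_t)]. -/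

import Mathlib

open MeasureTheory ProbabilityTheory Filter Topology

/-- the joint survival function of the process `V = max(-U/Z, M)`
generated by a generator `Z` and an independent uniform rv `U` satisfies
`P(V > f) = E[inf_t(|f(t)| Z_t)]` for `‖f‖∞ ≤ min(|M|, 1/m)`. -/
theorem stmt12
    {Ω : Type*} [MeasurableSpace Ω] (P : Measure Ω) [IsProbabilityMeasure P]
    (Z : Ω → Set.Icc (0:ℝ) 1 → ℝ) (m : ℝ) (hm : 1 ≤ m)
    (hZmeas : ∀ t, Measurable fun ω => Z ω t)
    (hZcont : ∀ ω, Continuous (Z ω))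
    (hZbd : ∀ ω t, Z ω t ∈ Set.Icc (0:ℝ) m)
    (hZmean : ∀ t, ∫ ω, Z ω t ∂P = 1)
    (U : Ω → ℝ) (hUmeas : Measurable U)
    (hUunif : Measure.map U P = volume.restrict (Set.Ioo (0:ℝ) 1))
    (hindep : IndepFun U Z P)
    (M : ℝ) (hM : M < 0)
    (V : Ω → Set.Icc (0:ℝ) 1 → ℝ)
    (hV : ∀ ω t, V ω t = if Z ω t = 0 then M else max (-(U ω) / Z ω t) M)
    (f : Set.Icc (0:ℝ) 1 → ℝ)
    (hfbd : ∃ B, ∀ t, |f t| ≤ B)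
    (hfnonpos : ∀ t, f t ≤ 0)
    (hfdisc : {t | ¬ ContinuousAt f t}.Finite)
    (hfsup : (⨆ t, |f t|) ≤ min |M| (1 / m)) :
    P {ω | ∀ t, f t < V ω t}
      = ENNReal.ofReal (∫ ω, (⨅ t, |f t| * Z ω t) ∂P) := by
  classical
  obtain ⟨B, hB⟩ := hfbd
  have hm0 : (0:ℝ) < m := lt_of_lt_of_le one_pos hm
  have hbddA : BddAbove (Set.range fun t => |f t|) := ⟨B, by rintro x ⟨t, rfl⟩; exact hB t⟩
  have hfM : ∀ t, M ≤ f t := by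
    intro t
    have h1 : |f t| ≤ |M| :=
      le_trans (le_ciSup hbddA t) (le_trans hfsup (min_le_left _ _))
    have h2 : -|M| ≤ f t := (abs_le.mp h1).1
    have h3 : |M| = -M := abs_of_neg hM
    linarith
  have hfm1 : ∀ t, |f t| ≤ 1 / m := fun t =>
    le_trans (le_ciSup hbddA t) (le_trans hfsup (min_le_right _ _))
  have hh0 : ∀ (ω : Ω) (t : Set.Icc (0:ℝ) 1), 0 ≤ |f t| * Z ω t := fun ω t =>
    mul_nonneg (abs_nonneg _) (hZbd ω t).1
  have hbdd : ∀ ω : Ω, BddBelow (Set.range fun t => |f t| * Z ω t) := fun ω =>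
    ⟨0, by rintro x ⟨t, rfl⟩; exact hh0 ω t⟩
  set g : Ω → ℝ := fun ω => ⨅ t, |f t| * Z ω t with hgdef
  have hg0 : ∀ ω, 0 ≤ g ω := fun ω => le_ciInf (hh0 ω)
  have t0 : Set.Icc (0:ℝ) 1 := ⟨0, by norm_num⟩
  have hg1 : ∀ ω, g ω ≤ 1 := by
    intro ω
    refine le_trans (ciInf_le (hbdd ω) t0) ?_
    calc |f t0| * Z ω t0 ≤ (1/m) * m :=
          mul_le_mul (hfm1 t0) (hZbd ω t0).2 (hZbd ω t0).1 (by positivity)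
      _ = 1 := by field_simp
  -- countable representation of the infimum
  haveI : Nonempty (Set.Icc (0:ℝ) 1) := ⟨t0⟩
  obtain ⟨T, hTc, hTd⟩ := TopologicalSpace.exists_countable_dense (Set.Icc (0:ℝ) 1)
  set S : Set (Set.Icc (0:ℝ) 1) := T ∪ {t | ¬ ContinuousAt f t} with hSdef
  have hSc : S.Countable := hTc.union hfdisc.countable
  haveI : Countable S := hSc.to_subtype
  haveI : Nonempty S := (hTd.nonempty.mono Set.subset_union_left).to_subtype
  have hgS : ∀ ω, g ω = ⨅ s : S, |f s.1| * Z ω s.1 := by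
    intro ω
    have hbS : BddBelow (Set.range fun s : S => |f s.1| * Z ω s.1) :=
      ⟨0, by rintro x ⟨s, rfl⟩; exact hh0 ω s.1⟩
    refine le_antisymm (le_ciInf fun s => ciInf_le (hbdd ω) s.1) (le_ciInf fun t => ?_)
    by_cases ht : t ∈ S
    · exact ciInf_le hbS ⟨t, ht⟩
    · have hfc : ContinuousAt f t := by
        by_contra hc
        exact ht (Or.inr hc)
      have hhc : ContinuousAt (fun u => |f u| * Z ω u) t :=
        hfc.abs.mul (hZcont ω).continuousAt
      have ht' : t ∈ closure T := hTd t
      obtain ⟨x, hxT, hxlim⟩ := mem_closure_iff_seq_limit.mp ht'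
      have hlim : Tendsto (fun n => |f (x n)| * Z ω (x n)) atTop (𝓝 (|f t| * Z ω t)) :=
        (hhc.tendsto).comp hxlim
      exact ge_of_tendsto hlim
        (Eventually.of_forall fun n => ciInf_le hbS ⟨x n, Or.inl (hxT n)⟩)
  -- measurability and independence of g
  have hZm : Measurable Z := measurable_pi_iff.mpr hZmeas
  have hGm : Measurable (fun φ : Set.Icc (0:ℝ) 1 → ℝ => ⨅ s : S, |f s.1| * φ s.1) :=
    Measurable.iInf fun s => (measurable_pi_apply s.1).const_mul _
  have hgG : g = (fun φ : Set.Icc (0:ℝ) 1 → ℝ => ⨅ s : S, |f s.1| * φ s.1) ∘ Z :=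
    funext fun ω => hgS ω
  have hgm : Measurable g := by rw [hgG]; exact hGm.comp hZm
  have hindg : IndepFun U g P := by
    rw [hgG]
    exact hindep.comp measurable_id hGm
  have hgint : Integrable g P :=
    ⟨hgm.aestronglyMeasurable, HasFiniteIntegral.of_bounded (C := 1)
      (Filter.Eventually.of_forall fun ω => by
        rw [Real.norm_eq_abs, abs_of_nonneg (hg0 ω)]; exact hg1 ω)⟩
  -- the joint law is a product
  have hmap : Measure.map (fun ω => (U ω, g ω)) P = (Measure.map U P).prod (Measure.map g P) :=
    (indepFun_iff_map_prod_eq_prod_map_map hUmeas.aemeasurable hgm.aemeasurable).mp hindg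
  have hgIcc : ∀ᵐ c ∂(Measure.map g P), c ∈ Set.Icc (0:ℝ) 1 :=
    (ae_map_iff hgm.aemeasurable measurableSet_Icc).mpr
      (Filter.Eventually.of_forall fun ω => ⟨hg0 ω, hg1 ω⟩)
  -- the uniform measure of suitable sets
  have hvol : ∀ c : ℝ, c ∈ Set.Icc (0:ℝ) 1 → ∀ A : Set ℝ, MeasurableSet A →
      Set.Ioo (0:ℝ) c ⊆ A → (A ∩ Set.Ioo 0 1) ⊆ Set.Icc (0:ℝ) c →
      (Measure.map U P) A = ENNReal.ofReal c := by
    rintro c ⟨hc0, hc1⟩ A hA hsub1 hsub2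
    rw [hUunif, Measure.restrict_apply hA]
    refine le_antisymm ?_ ?_
    · calc volume (A ∩ Set.Ioo 0 1) ≤ volume (Set.Icc (0:ℝ) c) := measure_mono hsub2
        _ = ENNReal.ofReal c := by rw [Real.volume_Icc]; norm_num
    · calc ENNReal.ofReal c = volume (Set.Ioo (0:ℝ) c) := by rw [Real.volume_Ioo]; norm_num
        _ ≤ volume (A ∩ Set.Ioo 0 1) :=
            measure_mono fun u hu => ⟨hsub1 hu, hu.1, lt_of_lt_of_le hu.2 hc1⟩
  -- master computation
  have compute : ∀ s : Set (ℝ × ℝ), MeasurableSet s →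
      (∀ c : ℝ, c ∈ Set.Icc (0:ℝ) 1 →
        (Measure.map U P) ((fun u => (u, c)) ⁻¹' s) = ENNReal.ofReal c) →
      P ((fun ω => (U ω, g ω)) ⁻¹' s) = ENNReal.ofReal (∫ ω, g ω ∂P) := by
    intro s hs hslice
    have h1 : P ((fun ω => (U ω, g ω)) ⁻¹' s) = Measure.map (fun ω => (U ω, g ω)) P s :=
      (Measure.map_apply (hUmeas.prodMk hgm) hs).symm
    rw [h1, hmap, Measure.prod_apply_symm hs]
    have h2 : ∫⁻ c, (Measure.map U P) ((fun u => (u, c)) ⁻¹' s) ∂(Measure.map g P)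
        = ∫⁻ c, ENNReal.ofReal c ∂(Measure.map g P) :=
      lintegral_congr_ae (hgIcc.mono fun c hc => hslice c hc)
    rw [h2, lintegral_map ENNReal.measurable_ofReal hgm,
      ← ofReal_integral_eq_lintegral_ofReal hgint (Filter.Eventually.of_forall hg0)]
  -- the two events
  have hA' : P {ω | U ω < g ω} = ENNReal.ofReal (∫ ω, g ω ∂P) := by
    have := compute {p : ℝ × ℝ | p.1 < p.2} (measurableSet_lt measurable_fst measurable_snd) ?_
    · exact this
    · rintro c ⟨hc0, hc1⟩
      have hpre : (fun u : ℝ => (u, c)) ⁻¹' {p : ℝ × ℝ | p.1 < p.2} = Set.Iio c := rfl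
      rw [hpre]
      exact hvol c ⟨hc0, hc1⟩ _ measurableSet_Iio (fun u hu => hu.2)
        (fun u hu => ⟨le_of_lt hu.2.1, le_of_lt hu.1⟩)
  have hB' : P {ω | U ω ≤ g ω} = ENNReal.ofReal (∫ ω, g ω ∂P) := by
    have := compute {p : ℝ × ℝ | p.1 ≤ p.2} (measurableSet_le measurable_fst measurable_snd) ?_
    · exact this
    · rintro c ⟨hc0, hc1⟩
      have hpre : (fun u : ℝ => (u, c)) ⁻¹' {p : ℝ × ℝ | p.1 ≤ p.2} = Set.Iic c := rfl
      rw [hpre]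
      exact hvol c ⟨hc0, hc1⟩ _ measurableSet_Iic (fun u hu => le_of_lt hu.2)
        (fun u hu => ⟨le_of_lt hu.2.1, hu.1⟩)
  -- event inclusions
  have hEsubB : {ω | ∀ t, f t < V ω t} ⊆ {ω | U ω ≤ g ω} := by
    intro ω hω
    show U ω ≤ ⨅ t, |f t| * Z ω t
    refine le_ciInf fun t => ?_
    have hVt := hω t
    rw [hV ω t] at hVt
    by_cases hz : Z ω t = 0
    · rw [if_pos hz] at hVt
      exact absurd hVt (not_lt.mpr (hfM t))
    · rw [if_neg hz] at hVt
      have hzpos : 0 < Z ω t := lt_of_le_of_ne (hZbd ω t).1 (Ne.symm hz)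
      have h3 : f t < -(U ω) / Z ω t := by
        rcases max_cases (-(U ω) / Z ω t) M with ⟨he, _⟩ | ⟨he, _⟩
        · rwa [he] at hVt
        · rw [he] at hVt; exact absurd hVt (not_lt.mpr (hfM t))
      have h4 : f t * Z ω t < -(U ω) := (lt_div_iff₀ hzpos).mp h3
      have habs : |f t| = -f t := abs_of_nonpos (hfnonpos t)
      rw [habs, neg_mul]
      linarith
  have hAsubE : {ω | U ω < g ω ∧ 0 < U ω} ⊆ {ω | ∀ t, f t < V ω t} := by
    intro ω hω
    obtain ⟨hlt, hU0⟩ := hω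
    intro t
    have hlt' : U ω < |f t| * Z ω t := lt_of_lt_of_le hlt (ciInf_le (hbdd ω) t)
    have hzpos : 0 < Z ω t := by
      by_contra hz
      have hz0 : Z ω t = 0 := le_antisymm (not_lt.mp hz) (hZbd ω t).1
      rw [hz0, mul_zero] at hlt'
      linarith
    rw [hV ω t, if_neg (ne_of_gt hzpos)]
    refine lt_of_lt_of_le ?_ (le_max_left _ _)
    rw [lt_div_iff₀ hzpos]
    have habs : |f t| = -f t := abs_of_nonpos (hfnonpos t)
    rw [habs, neg_mul] at hlt'
    linarith
  -- U is a.s. positive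
  have hU01 : ∀ᵐ ω ∂P, 0 < U ω := by
    have hms : MeasurableSet (U ⁻¹' Set.Ioo (0:ℝ) 1) := hUmeas measurableSet_Ioo
    have h1 : P (U ⁻¹' Set.Ioo (0:ℝ) 1) = 1 := by
      rw [← Measure.map_apply hUmeas measurableSet_Ioo, hUunif,
        Measure.restrict_apply measurableSet_Ioo]
      simp [Real.volume_Ioo]
    have h2 : P (U ⁻¹' Set.Ioo (0:ℝ) 1)ᶜ = 0 := by
      rw [measure_compl hms (measure_ne_top _ _), h1, measure_univ]
      simp
    refine ae_iff.mpr (measure_mono_null ?_ h2)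
    intro ω hω
    exact fun hmem => hω hmem.1
  have hAeq : P {ω | U ω < g ω ∧ 0 < U ω} = P {ω | U ω < g ω} := by
    refine measure_congr ?_
    filter_upwards [hU01] with ω hω
    simp only [Set.mem_setOf_eq, eq_iff_iff]
    exact ⟨fun h => h.1, fun h => ⟨h, hω⟩⟩
  -- conclusion
  refine le_antisymm ?_ ?_
  · calc P {ω | ∀ t, f t < V ω t} ≤ P {ω | U ω ≤ g ω} := measure_mono hEsubB
      _ = ENNReal.ofReal (∫ ω, g ω ∂P) := hB'
  · calc ENNReal.ofReal (∫ ω, g ω ∂P) = P {ω | U ω < g ω} := hA'.symm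
      _ = P {ω | U ω < g ω ∧ 0 < U ω} := hAeq.symm
      _ ≤ P {ω | ∀ t, f t < V ω t} := measure_mono hAsubE
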